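/- The gametic diploid algebra G(n+1, 2), the commutative algebra of dimension n+1 over a field K of characteristic ≠ 2 with basis {a_0,…,a_n} and products a_i a_j = ½a_i + ½a_j, is dimensionally nilpotent: it admits a derivation d with d^{n+1} = 0 and d^n ≠ 0. -/

import Mathlib

section GamAux

variable {K A : Type*} [Field K] [NonUnitalNonAssocCommRing A] [Module K A]
  [SMulCommClass K A A] [IsScalarTower K A A]

/-- Image of the basis vectors under the derivation, for `n = m + 1 ≥ 1`. -/
noncomputable def gamF {m : ℕ} (a : Module.Basis (Fin (m + 2)) K A) (i : Fin (m + 2)) : A :=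
  (if _h : i.val = 0 ∨ i.val = m + 1 then a 0
   else a ⟨i.val + 1, by have := i.isLt; omega⟩) - a 1

/-- The auxiliary vectors `e_k = a_0 - a_k` (zero out of range). -/
noncomputable def gamG {m : ℕ} (a : Module.Basis (Fin (m + 2)) K A) (k : ℕ) : A :=
  if h : k ≤ m + 1 then a 0 - a ⟨k, by omega⟩ else 0

lemma gamF_exists {m : ℕ} (a : Module.Basis (Fin (m + 2)) K A) (i : Fin (m + 2)) :
    ∃ s, gamF a i = a s - a 1 := by
  unfold gamF; split <;> exact ⟨_, rfl⟩

lemma gam_sub_mul {n : ℕ} (a : Module.Basis (Fin (n + 1)) K A)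
    (hprod : ∀ i j : Fin (n + 1), a i * a j = (2 : K)⁻¹ • a i + (2 : K)⁻¹ • a j)
    (s t j : Fin (n + 1)) : (a s - a t) * a j = (2 : K)⁻¹ • (a s - a t) := by
  rw [sub_mul, hprod, hprod, smul_sub]; abel

end GamAux

/-- The gametic diploid algebra G(n+1,2), with basis a_0,…,a_n and products
a_i a_j = ½a_i + ½a_j over a field of characteristic ≠ 2, is dimensionally
nilpotent: it admits a derivation d with d^{n+1} = 0 and d^n ≠ 0. -/
theorem gametic_dimensionally_nilpotent {K A : Type*} [Field K]
    [NonUnitalNonAssocCommRing A] [Module K A] [SMulCommClass K A A] [IsScalarTower K A A]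
    (h2 : (2 : K) ≠ 0) (n : ℕ)
    (a : Module.Basis (Fin (n + 1)) K A)
    (hprod : ∀ i j : Fin (n + 1), a i * a j = (2 : K)⁻¹ • a i + (2 : K)⁻¹ • a j) :
    ∃ d : Module.End K A, (∀ x y : A, d (x * y) = d x * y + x * d y) ∧
      d ^ (n + 1) = 0 ∧ d ^ n ≠ 0 := by
  obtain _ | m := n
  · -- n = 0 : take d = 0
    refine ⟨0, by simp, by simp, ?_⟩
    intro h
    have h0 := LinearMap.congr_fun h (a 0)
    simp at h0
    exact a.ne_zero 0 h0
  · -- n = m + 1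
    set d : Module.End K A := a.constr K (gamF a) with hd_def
    have hda : ∀ i, d (a i) = gamF a i := fun i => a.constr_basis K (gamF a) i
    -- derivation property
    have hder : ∀ x y : A, d (x * y) = d x * y + x * d y := by
      have key : ∀ i j : Fin (m + 2), d (a i * a j) = d (a i) * a j + a i * d (a j) := by
        intro i j
        obtain ⟨s, hs⟩ := gamF_exists a i
        obtain ⟨t, ht⟩ := gamF_exists a j
        rw [hprod, map_add, map_smul, map_smul, hda i, hda j, hs, ht,
          gam_sub_mul a hprod, mul_comm (a i), gam_sub_mul a hprod]
      have hmaps :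
          (LinearMap.llcomp K A A A d).comp (LinearMap.mul K A)
            = (LinearMap.mul K A).comp d + (LinearMap.lcomp K A d).comp (LinearMap.mul K A) := by
        refine a.ext fun i => a.ext fun j => ?_
        simpa using key i j
      intro x y
      have := LinearMap.congr_fun (LinearMap.congr_fun hmaps x) y
      simpa using this
    -- iterate computations
    have hB : ∀ k : ℕ, 1 ≤ k → d (gamG a k) = gamG a (k + 1) := by
      intro k hk
      by_cases h : k ≤ m + 1
      · rw [gamG, dif_pos h, map_sub, hda, hda, gamF, gamF]
        rw [dif_pos (by simp)]
        by_cases hk2 : k = m + 1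
        · subst hk2
          rw [dif_pos (by simp)]
          rw [gamG, dif_neg (by omega)]
          abel
        · rw [dif_neg (by simp <;> omega)]
          rw [gamG, dif_pos (by omega)]
          have : (1 : Fin (m + 2)) = ⟨1, by omega⟩ := rfl
          rw [this]
          abel
      · rw [gamG, dif_neg h, map_zero, gamG, dif_neg (by omega)]
    have hA : d (a 0) = gamG a 1 := by
      rw [hda, gamF, dif_pos (by simp), gamG, dif_pos (by omega)]
      exact congrArg (fun i => a 0 - a i) (Fin.ext (by simp))
    have hiterG : ∀ j k : ℕ, 1 ≤ k → (d ^ j) (gamG a k) = gamG a (k + j) := by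
      intro j
      induction j with
      | zero => intro k hk; simp
      | succ j ih =>
        intro k hk
        rw [pow_succ, Module.End.mul_apply, hB k hk, ih (k + 1) (by omega)]
        ring_nf
    have hiter0 : ∀ j : ℕ, (d ^ (j + 1)) (a 0) = gamG a (j + 1) := by
      intro j
      rw [pow_succ, Module.End.mul_apply, hA, hiterG j 1 le_rfl]
      ring_nf
    refine ⟨d, hder, ?_, ?_⟩
    · refine a.ext fun i => ?_
      rw [LinearMap.zero_apply]
      by_cases hi : i = 0
      · subst hi
        rw [hiter0 (m + 1), gamG, dif_neg (by omega)]
      · have hival : 1 ≤ i.val := by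
          rcases Nat.eq_zero_or_pos i.val with h0 | h1
          · exact absurd (Fin.ext h0) hi
          · exact h1
        have hai : a i = a 0 - gamG a i.val := by
          rw [gamG, dif_pos (by have := i.isLt; omega)]
          simp
        rw [hai, map_sub, hiter0 (m + 1), hiterG _ _ hival,
          gamG, dif_neg (by omega), gamG, dif_neg (by omega), sub_zero]
    · intro h
      have h0 := LinearMap.congr_fun h (a 0)
      rw [hiter0 m, LinearMap.zero_apply, gamG, dif_pos le_rfl, sub_eq_zero] at h0
      have : (0 : Fin (m + 2)) = ⟨m + 1, by omega⟩ := a.injective h0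
      exact absurd (congrArg Fin.val this) (by simp)
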